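/- Let n ≥ 4 be an integer with n ≡ 0 (mod 4), let f₀ be the quadratic form on ℚⁿ given by f₀(x) = -x₀² + x₁² + ⋯ + x_{n-1}², and for a positive rational a let f_a be the quadratic form on ℚ^{n+1} given by f_a(x) = f₀(x₀,…,x_{n-1}) + a·x_n². Then for all prime numbers p and q with p ≡ q ≡ 1 (mod 4), the forms f_p and f_q are similar: q·f_p is equivalent to p·f_q over ℚ. -/

import Mathlib

namespace FormsSimilarAux

/-- Extend `x : Fin (n+1) → ℚ` to `ℕ → ℚ` by zero. -/
def ext (n : ℕ) (x : Fin (n + 1) → ℚ) (j : ℕ) : ℚ :=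
  if h : j < n + 1 then x ⟨j, h⟩ else 0

lemma ext_lt (n : ℕ) (x : Fin (n + 1) → ℚ) {j : ℕ} (h : j < n + 1) :
    ext n x j = x ⟨j, h⟩ := dif_pos h

lemma ext_add (n : ℕ) (x y : Fin (n + 1) → ℚ) (j : ℕ) :
    ext n (x + y) j = ext n x j + ext n y j := by
  unfold ext; split <;> simp

lemma ext_smul (n : ℕ) (c : ℚ) (x : Fin (n + 1) → ℚ) (j : ℕ) :
    ext n (c • x) j = c * ext n x j := by
  unfold ext; split <;> simp

/-- The block transformation: identity on the last coordinate, a hyperbolic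
transformation on coordinates 0,1, and rotation-like maps on pairs (2k, 2k+1). -/
def Tmap (n : ℕ) (u v s t : ℚ) (x : Fin (n + 1) → ℚ) (i : Fin (n + 1)) : ℚ :=
  if i.val = n then x i
  else if i.val = 0 then u * ext n x 0 + v * ext n x 1
  else if i.val = 1 then v * ext n x 0 + u * ext n x 1
  else if i.val % 2 = 0 then s * ext n x i.val - t * ext n x (i.val + 1)
  else t * ext n x (i.val - 1) + s * ext n x i.val

lemma Tmap_add (n : ℕ) (u v s t : ℚ) (x y : Fin (n + 1) → ℚ) :
    Tmap n u v s t (x + y) = Tmap n u v s t x + Tmap n u v s t y := by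
  funext i
  simp only [Tmap, Pi.add_apply, ext_add]
  split_ifs <;> ring

lemma Tmap_smul (n : ℕ) (u v s t : ℚ) (c : ℚ) (x : Fin (n + 1) → ℚ) :
    Tmap n u v s t (c • x) = c • Tmap n u v s t x := by
  funext i
  simp only [Tmap, Pi.smul_apply, ext_smul, smul_eq_mul]
  split_ifs <;> ring

/-- Value of `Tmap` at the last coordinate. -/
lemma Tmap_last (n : ℕ) (u v s t : ℚ) (x : Fin (n + 1) → ℚ) {j : ℕ} (hj : j < n + 1)
    (h : j = n) : ext n (Tmap n u v s t x) j = ext n x j := by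
  rw [ext_lt n _ hj, ext_lt n _ hj, Tmap, if_pos h]

lemma Tmap_zero (n : ℕ) (hn : 1 ≤ n) (u v s t : ℚ) (x : Fin (n + 1) → ℚ) :
    ext n (Tmap n u v s t x) 0 = u * ext n x 0 + v * ext n x 1 := by
  rw [ext_lt n _ (by omega), Tmap]
  rw [if_neg (by simp; omega), if_pos rfl]

lemma Tmap_one (n : ℕ) (hn : 2 ≤ n) (u v s t : ℚ) (x : Fin (n + 1) → ℚ) :
    ext n (Tmap n u v s t x) 1 = v * ext n x 0 + u * ext n x 1 := by
  rw [ext_lt n _ (by omega), Tmap]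
  rw [if_neg (by simp; omega), if_neg (by simp), if_pos rfl]

lemma Tmap_even (n : ℕ) (u v s t : ℚ) (x : Fin (n + 1) → ℚ) {j : ℕ}
    (h2 : 2 ≤ j) (hjn : j < n) (he : j % 2 = 0) :
    ext n (Tmap n u v s t x) j = s * ext n x j - t * ext n x (j + 1) := by
  rw [ext_lt n _ (by omega), Tmap]
  rw [if_neg (by simp; omega), if_neg (by simp; omega), if_neg (by simp; omega),
    if_pos (by simpa using he)]

lemma Tmap_odd (n : ℕ) (u v s t : ℚ) (x : Fin (n + 1) → ℚ) {j : ℕ}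
    (h2 : 3 ≤ j) (hjn : j < n) (he : j % 2 = 1) :
    ext n (Tmap n u v s t x) j = t * ext n x (j - 1) + s * ext n x j := by
  rw [ext_lt n _ (by omega), Tmap]
  rw [if_neg (by simp; omega), if_neg (by simp; omega), if_neg (by simp; omega),
    if_neg (by simp; omega)]

/-- Composition of two `Tmap`s whose blocks are mutually inverse is the identity. -/
lemma Tmap_comp (n : ℕ) (hn : 4 ≤ n) (hne : n % 2 = 0)
    (u v s t u' v' s' t' : ℚ)
    (h1 : u' * u + v' * v = 1) (h2 : u' * v + v' * u = 0)
    (h3 : s' * s - t' * t = 1) (h4 : s' * t + t' * s = 0)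
    (x : Fin (n + 1) → ℚ) :
    Tmap n u' v' s' t' (Tmap n u v s t x) = x := by
  funext i
  have hiv : i.val < n + 1 := i.isLt
  have hx : ∀ (h : i.val < n + 1), x ⟨i.val, h⟩ = x i := fun h => congrArg x (Fin.ext rfl)
  rw [Tmap]
  by_cases hin : i.val = n
  · rw [if_pos hin, Tmap, if_pos hin]
  rw [if_neg hin]
  by_cases hi0 : i.val = 0
  · rw [if_pos hi0]
    rw [Tmap_zero n (by omega), Tmap_one n (by omega)]
    have : ext n x 0 = x i := by
      rw [ext_lt n x (by omega)]; exact congrArg x (Fin.ext hi0.symm)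
    rw [← this]
    linear_combination (ext n x 0) * h1 + (ext n x 1) * h2
  rw [if_neg hi0]
  by_cases hi1 : i.val = 1
  · rw [if_pos hi1]
    rw [Tmap_zero n (by omega), Tmap_one n (by omega)]
    have : ext n x 1 = x i := by
      rw [ext_lt n x (by omega)]; exact congrArg x (Fin.ext hi1.symm)
    rw [← this]
    linear_combination (ext n x 0) * h2 + (ext n x 1) * h1
  rw [if_neg hi1]
  by_cases hie : i.val % 2 = 0
  · rw [if_pos hie]
    have hlt : i.val < n := by omega
    have he1 : ext n (Tmap n u v s t x) (i.val + 1)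
        = t * ext n x (i.val + 1 - 1) + s * ext n x (i.val + 1) :=
      Tmap_odd n u v s t x (j := i.val + 1) (by omega) (by omega) (by omega)
    have h5 : i.val + 1 - 1 = i.val := by omega
    rw [h5] at he1
    rw [Tmap_even n u v s t x (by omega) hlt hie, he1]
    have : ext n x i.val = x i := (ext_lt n x hiv).trans (hx hiv)
    rw [← this]
    linear_combination (ext n x i.val) * h3 - (ext n x (i.val + 1)) * h4
  · rw [if_neg hie]
    have hie' : i.val % 2 = 1 := by omega
    have hlt : i.val < n := by omega
    have he1 : ext n (Tmap n u v s t x) (i.val - 1)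
        = s * ext n x (i.val - 1) - t * ext n x (i.val - 1 + 1) :=
      Tmap_even n u v s t x (j := i.val - 1) (by omega) (by omega) (by omega)
    have h5 : i.val - 1 + 1 = i.val := by omega
    rw [h5] at he1
    rw [Tmap_odd n u v s t x (by omega) hlt hie', he1]
    have : ext n x i.val = x i := (ext_lt n x hiv).trans (hx hiv)
    rw [← this]
    linear_combination (ext n x i.val) * h3 + (ext n x (i.val - 1)) * h4

lemma pair_sum (m : ℕ) (F : ℕ → ℚ) :
    ∑ j ∈ Finset.range (2 * m), F j = ∑ k ∈ Finset.range m, (F (2 * k) + F (2 * k + 1)) := by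
  induction m with
  | zero => simp
  | succ m ih =>
    rw [Finset.sum_range_succ, ← ih, show 2 * (m + 1) = (2 * m + 1) + 1 by ring,
      Finset.sum_range_succ, Finset.sum_range_succ]
    ring

end FormsSimilarAux

open FormsSimilarAux

/-- For `n ≥ 4` with `n ≡ 0 (mod 4)`,
`f₀(x) = -x₀² + x₁² + ⋯ + x_{n-1}²` on `ℚⁿ`, and `f_a = f₀ + a·x_n²` on `ℚ^{n+1}`,
for all primes `p ≡ q ≡ 1 (mod 4)` the forms `f_p` and `f_q` are similar:
`q·f_p` is equivalent to `p·f_q` over `ℚ`. -/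
theorem forms_similar_of_zero_mod_four
    (n : ℕ) (hn : 4 ≤ n) (hmod : n % 4 = 0)
    (p q : ℕ) (hp : p.Prime) (hq : q.Prime) (hp1 : p % 4 = 1) (hq1 : q % 4 = 1)
    (fp fq : (Fin (n + 1) → ℚ) → ℚ)
    (hfp : ∀ x, fp x =
      (∑ i : Fin n, (if i.val = 0 then (-1 : ℚ) else 1) * x i.castSucc ^ 2)
        + (p : ℚ) * x (Fin.last n) ^ 2)
    (hfq : ∀ x, fq x =
      (∑ i : Fin n, (if i.val = 0 then (-1 : ℚ) else 1) * x i.castSucc ^ 2)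
        + (q : ℚ) * x (Fin.last n) ^ 2) :
    ∃ T : (Fin (n + 1) → ℚ) ≃ₗ[ℚ] (Fin (n + 1) → ℚ),
      ∀ x, (p : ℚ) * fq (T x) = (q : ℚ) * fp x := by
  -- p and q as nonzero rationals
  set P : ℚ := (p : ℚ) with hP_def
  set Q : ℚ := (q : ℚ) with hQ_def
  have hP : P ≠ 0 := by
    simp only [hP_def, ne_eq, Nat.cast_eq_zero]; exact hp.ne_zero
  have hQ : Q ≠ 0 := by
    simp only [hQ_def, ne_eq, Nat.cast_eq_zero]; exact hq.ne_zero
  -- sums of two squares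
  haveI : Fact p.Prime := ⟨hp⟩
  haveI : Fact q.Prime := ⟨hq⟩
  obtain ⟨a, b, hab⟩ := Nat.Prime.sq_add_sq (p := p) (by omega)
  obtain ⟨c, d, hcd⟩ := Nat.Prime.sq_add_sq (p := q) (by omega)
  have habQ : (a : ℚ) ^ 2 + (b : ℚ) ^ 2 = P := by
    rw [hP_def]; exact_mod_cast congrArg (Nat.cast : ℕ → ℚ) hab
  have hcdQ : (c : ℚ) ^ 2 + (d : ℚ) ^ 2 = Q := by
    rw [hQ_def]; exact_mod_cast congrArg (Nat.cast : ℕ → ℚ) hcd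
  -- the parameters
  set r : ℚ := Q / P with hr_def
  have hr : r ≠ 0 := div_ne_zero hQ hP
  set u : ℚ := (r + 1) / 2 with hu_def
  set v : ℚ := (r - 1) / 2 with hv_def
  set s : ℚ := ((a : ℚ) * c + (b : ℚ) * d) / P with hs_def
  set t : ℚ := ((a : ℚ) * d - (b : ℚ) * c) / P with ht_def
  have key1 : P * (u ^ 2 - v ^ 2) = Q := by
    rw [hu_def, hv_def, hr_def]; field_simp; ring
  have expand : ((a : ℚ) * c + (b : ℚ) * d) ^ 2 + ((a : ℚ) * d - (b : ℚ) * c) ^ 2 = Q * P := by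
    have : ((a : ℚ) * c + (b : ℚ) * d) ^ 2 + ((a : ℚ) * d - (b : ℚ) * c) ^ 2
        = ((a : ℚ) ^ 2 + (b : ℚ) ^ 2) * ((c : ℚ) ^ 2 + (d : ℚ) ^ 2) := by ring
    rw [this, habQ, hcdQ, mul_comm]
  have key2 : P * (s ^ 2 + t ^ 2) = Q := by
    rw [hs_def, ht_def]; field_simp; linear_combination expand
  have hst : s ^ 2 + t ^ 2 = r := by
    rw [hr_def]; field_simp; linear_combination key2
  have huv : u ^ 2 - v ^ 2 = r := by
    rw [hr_def]; field_simp; linear_combination key1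
  set u' : ℚ := u / r with hu'_def
  set v' : ℚ := -v / r with hv'_def
  set s' : ℚ := s / r with hs'_def
  set t' : ℚ := -t / r with ht'_def
  have c1 : u' * u + v' * v = 1 := by
    rw [hu'_def, hv'_def]; field_simp; linear_combination huv
  have c2 : u' * v + v' * u = 0 := by
    rw [hu'_def, hv'_def]; field_simp; ring
  have c3 : s' * s - t' * t = 1 := by
    rw [hs'_def, ht'_def]; field_simp; linear_combination hst
  have c4 : s' * t + t' * s = 0 := by
    rw [hs'_def, ht'_def]; field_simp; ring
  have c1' : u * u' + v * v' = 1 := by linarith [c1]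
  have c2' : u * v' + v * u' = 0 := by linarith [c2]
  have c3' : s * s' - t * t' = 1 := by linarith [c3]
  have c4' : s * t' + t * s' = 0 := by linarith [c4]
  have hne : n % 2 = 0 := by omega
  -- the linear equivalence
  refine ⟨{ toFun := Tmap n u v s t
            invFun := Tmap n u' v' s' t'
            map_add' := Tmap_add n u v s t
            map_smul' := Tmap_smul n u v s t
            left_inv := Tmap_comp n hn hne u v s t u' v' s' t' c1 c2 c3 c4
            right_inv := Tmap_comp n hn hne u' v' s' t' u v s t c1' c2' c3' c4' }, ?_⟩
  intro x
  show P * fq (Tmap n u v s t x) = Q * fp x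
  rw [hfp, hfq]
  -- last coordinate of the image
  have hlast : Tmap n u v s t x (Fin.last n) = x (Fin.last n) := by
    simp [Tmap]
  rw [hlast]
  -- rewrite both sums over Fin n as sums over range n using ext
  have hsum : ∀ z : Fin (n + 1) → ℚ,
      (∑ i : Fin n, (if i.val = 0 then (-1 : ℚ) else 1) * z i.castSucc ^ 2)
      = ∑ j ∈ Finset.range n, (if j = 0 then (-1 : ℚ) else 1) * ext n z j ^ 2 := by
    intro z
    rw [← Fin.sum_univ_eq_sum_range (fun j => (if j = 0 then (-1 : ℚ) else 1) * ext n z j ^ 2) n]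
    refine Finset.sum_congr rfl fun i _ => ?_
    have : ext n z i.val = z i.castSucc := by
      rw [ext_lt n z (by omega)]
      exact congrArg z (Fin.ext rfl)
    rw [this]
  rw [hsum, hsum]
  -- pair up the sum
  obtain ⟨m, hm⟩ : ∃ m, n = 2 * m := ⟨n / 2, by omega⟩
  have hm2 : 2 ≤ m := by omega
  set Y : ℕ → ℚ := ext n (Tmap n u v s t x) with hY_def
  set X : ℕ → ℚ := ext n x with hX_def
  have key : P * (∑ j ∈ Finset.range n, (if j = 0 then (-1 : ℚ) else 1) * Y j ^ 2)
      = Q * (∑ j ∈ Finset.range n, (if j = 0 then (-1 : ℚ) else 1) * X j ^ 2) := by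
    rw [hm, pair_sum, pair_sum, Finset.mul_sum, Finset.mul_sum]
    refine Finset.sum_congr rfl fun k hk => ?_
    have hkm : k < m := Finset.mem_range.mp hk
    by_cases hk0 : k = 0
    · subst hk0
      have e0 : (if (2 * 0 : ℕ) = 0 then (-1 : ℚ) else 1) = -1 := if_pos rfl
      have e1 : (if (2 * 0 + 1 : ℕ) = 0 then (-1 : ℚ) else 1) = 1 := if_neg (by omega)
      have hY0 : Y (2 * 0) = u * X 0 + v * X 1 := Tmap_zero n (by omega) u v s t x
      have hY1 : Y (2 * 0 + 1) = v * X 0 + u * X 1 := Tmap_one n (by omega) u v s t x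
      rw [e0, e1, hY0, hY1]
      have h20 : X (2 * 0) = X 0 := rfl
      have h21 : X (2 * 0 + 1) = X 1 := rfl
      rw [h20, h21]
      linear_combination (X 1 ^ 2 - X 0 ^ 2) * key1
    · have hk1 : 1 ≤ k := by omega
      have hje : 2 * k % 2 = 0 := by omega
      have hYe : Y (2 * k) = s * X (2 * k) - t * X (2 * k + 1) :=
        Tmap_even n u v s t x (by omega) (by omega) hje
      have hYo : Y (2 * k + 1) = t * X (2 * k + 1 - 1) + s * X (2 * k + 1) :=
        Tmap_odd n u v s t x (by omega) (by omega) (by omega)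
      have h5 : 2 * k + 1 - 1 = 2 * k := by omega
      rw [h5] at hYo
      rw [if_neg (by omega), if_neg (by omega), hYe, hYo]
      linear_combination (X (2 * k) ^ 2 + X (2 * k + 1) ^ 2) * key2
  linear_combination key + (x (Fin.last n) ^ 2) * mul_comm P Q
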